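/- Let t ∈ {2, −2}, let a ∈ SL(2,ℂ) with a ≠ ±e and tr(a) = t, and let r ∈ ℂ with r ≠ 2 (note that t² − 2 = 2 in this case). Then there is a bijection between the set C_t^r(a) = {x ∈ SL(2,ℂ) : x ≠ ±e, tr(x) = t, tr(ax) = r} and ℂ. -/

import Mathlib

/-- The trace of an element of SL(2,ℂ). -/
noncomputable def trSL (A : Matrix.SpecialLinearGroup (Fin 2) ℂ) : ℂ :=
  Matrix.trace (A : Matrix (Fin 2) (Fin 2) ℂ)

namespace CtrAux

open Matrix

/-- top-left entry of the parametrized family of solutions. -/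
noncomputable def pz (α δ t r z : ℂ) : ℂ := t / 2 + (2 - r) / 2 * ((α - δ) * z ^ 2 + 2 * z)

/-- bottom-left entry. -/
noncomputable def uz (γ r z : ℂ) : ℂ := (2 - r) * γ * z ^ 2

/-- top-right entry. -/
noncomputable def qz (α β γ δ t r z : ℂ) : ℂ :=
  (r - δ * t - (α - δ) * pz α δ t r z - β * uz γ r z) / γ

/-- The parametrized family of matrices. -/
noncomputable def Mz (α β γ δ t r z : ℂ) : Matrix (Fin 2) (Fin 2) ℂ :=
  !![pz α δ t r z, qz α β γ δ t r z; uz γ r z, t - pz α δ t r z]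

lemma det_Mz (α β γ δ t r z : ℂ) (ht : t = 2 ∨ t = -2) (hγ : γ ≠ 0)
    (hdet : α * δ - β * γ = 1) (hsum : α + δ = t) :
    (Mz α β γ δ t r z).det = 1 := by
  obtain rfl : δ = t - α := by linear_combination hsum
  obtain rfl : β = (α * (t - α) - 1) / γ := by
    field_simp
    linear_combination -hdet
  rcases ht with rfl | rfl <;>
    · simp only [Mz, pz, qz, uz, Matrix.det_fin_two_of]
      field_simp
      ring

lemma trace_Mz (α β γ δ t r z : ℂ) : (Mz α β γ δ t r z).trace = t := by
  simp [Mz, Matrix.trace_fin_two]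

lemma traceAX (α β γ δ t r z : ℂ) (hγ : γ ≠ 0) :
    α * pz α δ t r z + β * uz γ r z + γ * qz α β γ δ t r z + δ * (t - pz α δ t r z) = r := by
  simp only [qz]
  field_simp
  ring

lemma Mz_inj (α β γ δ t r : ℂ) (hγ : γ ≠ 0) (hr : r ≠ 2) {z w : ℂ}
    (h : Mz α β γ δ t r z = Mz α β γ δ t r w) : z = w := by
  have h2r : (2 : ℂ) - r ≠ 0 := sub_ne_zero.mpr (Ne.symm hr)
  have h10 : uz γ r z = uz γ r w := by
    have := congrFun (congrFun h 1) 0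
    simpa [Mz] using this
  have hsq : z ^ 2 = w ^ 2 := by
    apply mul_left_cancel₀ (mul_ne_zero h2r hγ)
    simp only [uz] at h10
    linear_combination h10
  have h00 : pz α δ t r z = pz α δ t r w := by
    have := congrFun (congrFun h 0) 0
    simpa [Mz] using this
  have h5 : (2 - r) * (z - w) = 0 := by
    simp only [pz] at h00
    linear_combination h00 - (2 - r) / 2 * (α - δ) * hsq
  rcases mul_eq_zero.mp h5 with h6 | h6
  · exact absurd h6 h2r
  · linear_combination h6

lemma exists_inj (t r : ℂ) (ht : t = 2 ∨ t = -2) (hr : r ≠ 2)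
    (a : Matrix.SpecialLinearGroup (Fin 2) ℂ) (hta : trSL a = t)
    (hγ : (a : Matrix (Fin 2) (Fin 2) ℂ) 1 0 ≠ 0) :
    ∃ f : ℂ → {x : Matrix.SpecialLinearGroup (Fin 2) ℂ // trSL x = t ∧ trSL (a * x) = r},
      Function.Injective f := by
  set A := (a : Matrix (Fin 2) (Fin 2) ℂ) with hA
  have hdet : A 0 0 * A 1 1 - A 0 1 * A 1 0 = 1 := by
    have h := a.2
    rw [Matrix.det_fin_two] at h
    linear_combination h
  have hsum : A 0 0 + A 1 1 = t := by
    have h := hta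
    rwa [trSL, Matrix.trace_fin_two] at h
  refine ⟨fun z => ⟨⟨Mz (A 0 0) (A 0 1) (A 1 0) (A 1 1) t r z,
      det_Mz _ _ _ _ _ _ _ ht hγ hdet hsum⟩, ?_, ?_⟩, ?_⟩
  · exact trace_Mz _ _ _ _ _ _ _
  · show Matrix.trace (A * Mz (A 0 0) (A 0 1) (A 1 0) (A 1 1) t r z) = r
    rw [Matrix.trace_fin_two]
    simp only [Matrix.mul_apply, Fin.sum_univ_two, Mz, Matrix.cons_val', Matrix.cons_val_zero,
      Matrix.cons_val_one, Matrix.head_cons, Matrix.head_fin_const, Matrix.empty_val',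
      Matrix.cons_val_fin_one, Matrix.of_apply]
    linear_combination traceAX (A 0 0) (A 0 1) (A 1 0) (A 1 1) t r z hγ
  · intro z w hzw
    apply Mz_inj (A 0 0) (A 0 1) (A 1 0) (A 1 1) t r hγ hr
    exact congrArg (fun x => (x.1 : Matrix (Fin 2) (Fin 2) ℂ)) hzw

end CtrAux

/-- Lemma 2.2, case `t = ±2`: for `a ∈ G(t)` and `r ≠ 2`, the set
`C_t^r(a) = {x ∈ G(t) : tr(ax) = r}` is in bijection with `ℂ`. -/
theorem C_t_r_equiv_complex
    (t : ℂ) (ht : t = 2 ∨ t = -2)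
    (a : Matrix.SpecialLinearGroup (Fin 2) ℂ)
    (ha1 : (a : Matrix (Fin 2) (Fin 2) ℂ) ≠ 1)
    (ha2 : (a : Matrix (Fin 2) (Fin 2) ℂ) ≠ -1)
    (hta : trSL a = t)
    (r : ℂ) (hr2 : r ≠ 2) :
    Nonempty
      ({x : Matrix.SpecialLinearGroup (Fin 2) ℂ //
          (x : Matrix (Fin 2) (Fin 2) ℂ) ≠ 1 ∧ (x : Matrix (Fin 2) (Fin 2) ℂ) ≠ -1 ∧
          trSL x = t ∧ trSL (a * x) = r} ≃ ℂ) := by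
  classical
  -- The conditions `x ≠ ±1` are automatic.
  have hiff : ∀ x : Matrix.SpecialLinearGroup (Fin 2) ℂ,
      ((x : Matrix (Fin 2) (Fin 2) ℂ) ≠ 1 ∧ (x : Matrix (Fin 2) (Fin 2) ℂ) ≠ -1 ∧
        trSL x = t ∧ trSL (a * x) = r) ↔ (trSL x = t ∧ trSL (a * x) = r) := by
    intro x
    constructor
    · rintro ⟨-, -, h1, h2⟩; exact ⟨h1, h2⟩
    · rintro ⟨h1, h2⟩
      refine ⟨?_, ?_, h1, h2⟩
      · intro hx
        apply hr2
        have : trSL (a * x) = trSL a := by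
          rw [trSL, trSL]
          congr 1
          rw [Matrix.SpecialLinearGroup.coe_mul, hx, mul_one]
        rw [this, hta] at h2
        have ht2 : t = 2 := by
          have := h1
          rw [trSL, hx] at this
          simp [Matrix.trace_fin_two, Matrix.one_apply] at this
          rcases ht with rfl | rfl
          · rfl
          · exfalso; norm_num at this
        rw [ht2] at h2; exact h2.symm
      · intro hx
        apply hr2
        have htr : trSL (a * x) = -trSL a := by
          rw [trSL, trSL]
          rw [Matrix.SpecialLinearGroup.coe_mul, hx, mul_neg_one, Matrix.trace_neg]
        have ht2 : t = -2 := by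
          have := h1
          rw [trSL, hx] at this
          simp [Matrix.trace_fin_two, Matrix.one_apply] at this
          rcases ht with rfl | rfl
          · exfalso; norm_num at this
          · rfl
        rw [htr, hta, ht2] at h2
        rw [← h2]; norm_num
  -- an injection from the solution set into ℂ³
  set S := {x : Matrix.SpecialLinearGroup (Fin 2) ℂ // trSL x = t ∧ trSL (a * x) = r} with hS
  have hup : Cardinal.mk S ≤ Cardinal.continuum := by
    have : Function.Injective (fun x : S => ((x.1 : Matrix (Fin 2) (Fin 2) ℂ) 0 0,
        (x.1 : Matrix (Fin 2) (Fin 2) ℂ) 0 1, (x.1 : Matrix (Fin 2) (Fin 2) ℂ) 1 0)) := by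
      intro x y hxy
      simp only [Prod.mk.injEq] at hxy
      obtain ⟨h1, h2, h3⟩ := hxy
      have h11 : (x.1 : Matrix (Fin 2) (Fin 2) ℂ) 1 1 = (y.1 : Matrix (Fin 2) (Fin 2) ℂ) 1 1 := by
        have hx := x.2.1; have hy := y.2.1
        rw [trSL, Matrix.trace_fin_two] at hx hy
        linear_combination hx - hy - h1
      apply Subtype.ext
      apply Subtype.ext
      ext i j
      fin_cases i <;> fin_cases j <;> assumption
    calc Cardinal.mk S ≤ Cardinal.mk (ℂ × ℂ × ℂ) := Cardinal.mk_le_of_injective this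
      _ = Cardinal.continuum := by
          simp [Cardinal.mk_prod, Cardinal.mk_complex,
            Cardinal.mul_eq_self Cardinal.aleph0_le_continuum]
  have hdown : Cardinal.continuum ≤ Cardinal.mk S := by
    -- case on which off-diagonal entry of a is nonzero
    by_cases hγ : (a : Matrix (Fin 2) (Fin 2) ℂ) 1 0 ≠ 0
    · obtain ⟨f, hf⟩ := CtrAux.exists_inj t r ht hr2 a hta hγ
      rw [← Cardinal.mk_complex]
      exact Cardinal.mk_le_of_injective hf
    · push_neg at hγ
      by_cases hβ : (a : Matrix (Fin 2) (Fin 2) ℂ) 0 1 ≠ 0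
      · -- use the transpose
        obtain ⟨aT, haT⟩ : ∃ aT : Matrix.SpecialLinearGroup (Fin 2) ℂ,
            (aT : Matrix (Fin 2) (Fin 2) ℂ) = (a : Matrix (Fin 2) (Fin 2) ℂ).transpose :=
          ⟨⟨(a : Matrix (Fin 2) (Fin 2) ℂ).transpose, by rw [Matrix.det_transpose]; exact a.2⟩, rfl⟩
        have htaT : trSL aT = t := by
          simp only [trSL] at hta ⊢
          rw [haT, Matrix.trace_transpose]
          exact hta
        have hγT : (aT : Matrix (Fin 2) (Fin 2) ℂ) 1 0 ≠ 0 := by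
          rw [haT]
          simpa [Matrix.transpose_apply] using hβ
        obtain ⟨f, hf⟩ := CtrAux.exists_inj t r ht hr2 aT htaT hγT
        -- transport solutions for aT to solutions for a via transpose
        have hg : ∀ y : {x : Matrix.SpecialLinearGroup (Fin 2) ℂ //
            trSL x = t ∧ trSL (aT * x) = r},
            ∃ x : S, (x.1 : Matrix (Fin 2) (Fin 2) ℂ) = ((y.1 : Matrix (Fin 2) (Fin 2) ℂ)).transpose := by
          intro y
          refine ⟨⟨⟨((y.1 : Matrix (Fin 2) (Fin 2) ℂ)).transpose,
            by rw [Matrix.det_transpose]; exact y.1.2⟩, ?_, ?_⟩, rfl⟩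
          · have h1 := y.2.1
            simp only [trSL] at h1 ⊢
            rw [Matrix.trace_transpose]
            exact h1
          · have h2 := y.2.2
            simp only [trSL, Matrix.SpecialLinearGroup.coe_mul] at h2 ⊢
            calc Matrix.trace ((a : Matrix (Fin 2) (Fin 2) ℂ) *
                  ((y.1 : Matrix (Fin 2) (Fin 2) ℂ)).transpose)
                = Matrix.trace (((y.1 : Matrix (Fin 2) (Fin 2) ℂ)) *
                    (a : Matrix (Fin 2) (Fin 2) ℂ).transpose).transpose := by
                  rw [Matrix.transpose_mul, Matrix.transpose_transpose]
              _ = Matrix.trace (((y.1 : Matrix (Fin 2) (Fin 2) ℂ)) *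
                    (a : Matrix (Fin 2) (Fin 2) ℂ).transpose) := Matrix.trace_transpose _
              _ = Matrix.trace ((a : Matrix (Fin 2) (Fin 2) ℂ).transpose *
                    ((y.1 : Matrix (Fin 2) (Fin 2) ℂ))) := Matrix.trace_mul_comm _ _
              _ = r := by rw [← haT]; exact h2
        choose g hgc using hg
        have hginj : Function.Injective g := by
          intro y1 y2 h
          have h1 : ((y1.1 : Matrix (Fin 2) (Fin 2) ℂ)).transpose = ((y2.1 : Matrix (Fin 2) (Fin 2) ℂ)).transpose := by
            rw [← hgc y1, ← hgc y2, h]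
          have h2 := congrArg Matrix.transpose h1
          simp only [Matrix.transpose_transpose] at h2
          exact Subtype.ext (Subtype.ext h2)
        rw [← Cardinal.mk_complex]
        exact Cardinal.mk_le_of_injective (hginj.comp hf)
      · -- both off-diagonal entries vanish: a = ±1, contradiction
        exfalso
        push_neg at hβ
        set A := (a : Matrix (Fin 2) (Fin 2) ℂ) with hA
        have hdet : A 0 0 * A 1 1 - A 0 1 * A 1 0 = 1 := by
          have h := a.2
          rw [Matrix.det_fin_two] at h
          linear_combination h
        have hsum : A 0 0 + A 1 1 = t := by
          have h := hta
          rwa [trSL, Matrix.trace_fin_two] at h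
        rw [hβ, hγ] at hdet
        simp only [mul_zero, sub_zero] at hdet
        have hdiff : (A 0 0 - A 1 1) ^ 2 = 0 := by
          rcases ht with rfl | rfl <;>
            · rw [show ((A 0 0 - A 1 1) ^ 2) = (A 0 0 + A 1 1)^2 - 4 * (A 0 0 * A 1 1) by ring,
                hsum, hdet]
              norm_num
        have heq : A 0 0 = A 1 1 := by
          have := pow_eq_zero_iff (n := 2) (by norm_num) |>.mp hdiff
          linear_combination this
        rcases ht with rfl | rfl
        · apply ha1
          have h00 : A 0 0 = 1 := by
            have h2 : A 0 0 * A 0 0 = 1 := by rw [heq] at hdet ⊢; exact hdet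
            have h3 : A 0 0 + A 0 0 = 2 := by rw [heq] at hsum ⊢; exact hsum
            have : (A 0 0 - 1) ^ 2 = 0 := by linear_combination h2 - h3
            have h4 := pow_eq_zero_iff (n := 2) (by norm_num) |>.mp this
            linear_combination h4
          ext i j
          fin_cases i <;> fin_cases j <;>
            simp [← hA, hβ, hγ, h00, heq ▸ h00, Matrix.one_apply]
        · apply ha2
          have h00 : A 0 0 = -1 := by
            have h2 : A 0 0 * A 0 0 = 1 := by rw [heq] at hdet ⊢; exact hdet
            have h3 : A 0 0 + A 0 0 = -2 := by rw [heq] at hsum ⊢; exact hsum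
            have : (A 0 0 + 1) ^ 2 = 0 := by linear_combination h2 + h3
            have h4 := pow_eq_zero_iff (n := 2) (by norm_num) |>.mp this
            linear_combination h4
          ext i j
          fin_cases i <;> fin_cases j <;>
            simp [← hA, hβ, hγ, h00, heq ▸ h00, Matrix.one_apply]
  have hcard : Cardinal.mk S = Cardinal.mk ℂ := by
    rw [Cardinal.mk_complex]
    exact le_antisymm hup hdown
  obtain ⟨e⟩ := Cardinal.eq.mp hcard
  exact ⟨(Equiv.subtypeEquivRight hiff).trans e⟩
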